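/- Let F be a field with char F ≠ 2 and (Ω,C) a Jordan configuration, i.e. a rainbow such that for all classes C, D ∈ C and all pairs (α,β), (α',β') lying in the same class of C one has |C(α)∩D^T(β)| + |D(α)∩C^T(β)| = |C(α')∩D^T(β')| + |D(α')∩C^T(β')|. Then the linear span in M_Ω(F) of the adjacency matrices of the classes of C is a coherent J-algebra: it contains I_Ω and J_Ω and is closed under transposition, the Jordan product A★B = (AB+BA)/2, and the Hadamard product. -/

import Mathlib

open Matrix

noncomputable section

namespace JordanPaper

open scoped Classical

variable {Ω : Type*}

/-- The adjacency matrix (over `F`) of a binary relation on `Ω`. -/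
def adj (F : Type*) [Zero F] [One F] (c : Set (Ω × Ω)) : Matrix Ω Ω F :=
  Matrix.of fun a b => if (a, b) ∈ c then 1 else 0

/-- The all-ones matrix. -/
def allOnes (F : Type*) [One F] : Matrix Ω Ω F :=
  Matrix.of fun _ _ => 1

/-- The diagonal relation `1_Δ` on a subset `Δ ⊆ Ω`. -/
def diagRel (Δ : Set Ω) : Set (Ω × Ω) := {p | p.1 = p.2 ∧ p.1 ∈ Δ}

/-- The transposed relation. -/
def transposeRel (c : Set (Ω × Ω)) : Set (Ω × Ω) := {p | (p.2, p.1) ∈ c}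

/-- `outSet c α = c(α) = {β | (α,β) ∈ c}`. -/
def outSet (c : Set (Ω × Ω)) (α : Ω) : Set Ω := {β | (α, β) ∈ c}

/-- A partition of `Ω × Ω` into nonempty pairwise disjoint classes. -/
def IsPartition (P : Set (Set (Ω × Ω))) : Prop :=
  (∀ c ∈ P, c.Nonempty) ∧ (∀ c ∈ P, ∀ d ∈ P, c ≠ d → c ∩ d = ∅) ∧ ⋃₀ P = Set.univ

/-- A partition of `Δ × Δ` into nonempty pairwise disjoint classes. -/
def IsPartitionOn (Δ : Set Ω) (P : Set (Set (Ω × Ω))) : Prop :=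
  (∀ c ∈ P, c.Nonempty) ∧ (∀ c ∈ P, ∀ d ∈ P, c ≠ d → c ∩ d = ∅) ∧ ⋃₀ P = Δ ×ˢ Δ

/-- A rainbow: a partition of `Ω × Ω` such that the diagonal is a union of classes
and the set of classes is closed under transposition. -/
def IsRainbow (P : Set (Set (Ω × Ω))) : Prop :=
  IsPartition P ∧
  (∀ c ∈ P, (c ∩ diagRel (Set.univ : Set Ω)).Nonempty → c ⊆ diagRel (Set.univ : Set Ω)) ∧
  (∀ c ∈ P, transposeRel c ∈ P)

/-- `|c(α) ∩ dᵀ(β)|`. -/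
def cnum (c d : Set (Ω × Ω)) (α β : Ω) : ℕ :=
  (outSet c α ∩ outSet (transposeRel d) β).ncard

/-- `|c(α) ∩ dᵀ(β)| + |d(α) ∩ cᵀ(β)|`. -/
def jnum (c d : Set (Ω × Ω)) (α β : Ω) : ℕ :=
  cnum c d α β + cnum d c α β

/-- The coherence (intersection-number) condition. -/
def IsCoherentCond (P : Set (Set (Ω × Ω))) : Prop :=
  ∀ c ∈ P, ∀ d ∈ P, ∀ f ∈ P, ∀ p ∈ f, ∀ q ∈ f,
    cnum c d (p : Ω × Ω).1 (p : Ω × Ω).2 = cnum c d (q : Ω × Ω).1 (q : Ω × Ω).2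

/-- The Jordan (symmetrized intersection-number) condition. -/
def IsJordanCond (P : Set (Set (Ω × Ω))) : Prop :=
  ∀ c ∈ P, ∀ d ∈ P, ∀ f ∈ P, ∀ p ∈ f, ∀ q ∈ f,
    jnum c d (p : Ω × Ω).1 (p : Ω × Ω).2 = jnum c d (q : Ω × Ω).1 (q : Ω × Ω).2

/-- A coherent configuration. -/
def IsCoherentConfig (P : Set (Set (Ω × Ω))) : Prop := IsRainbow P ∧ IsCoherentCond P

/-- A Jordan configuration. -/
def IsJordanConfig (P : Set (Set (Ω × Ω))) : Prop := IsRainbow P ∧ IsJordanCond P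

/-- An association scheme on a subset `Δ` (homogeneous coherent configuration on `Δ`). -/
def IsAssocSchemeOn (Δ : Set Ω) (P : Set (Set (Ω × Ω))) : Prop :=
  IsPartitionOn Δ P ∧ diagRel Δ ∈ P ∧ (∀ c ∈ P, transposeRel c ∈ P) ∧ IsCoherentCond P

/-- The Jordan product of matrices. -/
def jmul (F : Type*) [Field F] [Fintype Ω] (x y : Matrix Ω Ω F) : Matrix Ω Ω F :=
  (2 : F)⁻¹ • (x * y + y * x)

/-- A coherent algebra. -/
def IsCoherentAlgebra (F : Type*) [Field F] [Fintype Ω] [DecidableEq Ω]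
    (A : Submodule F (Matrix Ω Ω F)) : Prop :=
  (1 : Matrix Ω Ω F) ∈ A ∧ allOnes F ∈ A ∧ (∀ x ∈ A, xᵀ ∈ A) ∧
  (∀ x ∈ A, ∀ y ∈ A, x * y ∈ A) ∧ (∀ x ∈ A, ∀ y ∈ A, Matrix.hadamard x y ∈ A)

/-- A coherent Jordan algebra. -/
def IsCoherentJAlgebra (F : Type*) [Field F] [Fintype Ω] [DecidableEq Ω]
    (A : Submodule F (Matrix Ω Ω F)) : Prop :=
  (1 : Matrix Ω Ω F) ∈ A ∧ allOnes F ∈ A ∧ (∀ x ∈ A, xᵀ ∈ A) ∧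
  (∀ x ∈ A, ∀ y ∈ A, jmul F x y ∈ A) ∧ (∀ x ∈ A, ∀ y ∈ A, Matrix.hadamard x y ∈ A)

section Aux

variable {F : Type*} [Field F] {Ω : Type*} [Fintype Ω] [DecidableEq Ω]

/-- Any matrix constant on the classes of a partition lies in the span of the adjacency
matrices of the classes. -/
lemma mem_span_of_const (P : Set (Set (Ω × Ω))) (hP : IsPartition P) (x : Matrix Ω Ω F)
    (h : ∀ f ∈ P, ∀ p ∈ f, ∀ q ∈ f, x p.1 p.2 = x q.1 q.2) :
    x ∈ Submodule.span F (adj F '' P) := by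
  have hfin : P.Finite := Set.toFinite P
  classical
  set coeff : Set (Ω × Ω) → F := fun f =>
    if hf : f.Nonempty then x hf.choose.1 hf.choose.2 else 0 with hcoeff
  have hx : x = ∑ f ∈ hfin.toFinset, coeff f • adj F f := by
    ext α β
    have hcover : (α, β) ∈ ⋃₀ P := by rw [hP.2.2]; trivial
    obtain ⟨f0, hf0P, hf0⟩ := hcover
    rw [Matrix.sum_apply]
    rw [Finset.sum_eq_single f0]
    · have hne : f0.Nonempty := ⟨_, hf0⟩
      simp only [hcoeff, dif_pos hne, Matrix.smul_apply, adj, Matrix.of_apply, if_pos hf0,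
        smul_eq_mul, mul_one]
      exact (h f0 hf0P (α, β) hf0 _ hne.choose_spec)
    · intro g hg hgne
      have hgP : g ∈ P := hfin.mem_toFinset.mp hg
      have : (α, β) ∉ g := by
        intro hmem
        have := hP.2.1 g hgP f0 hf0P hgne
        exact absurd (Set.mem_inter hmem hf0) (by rw [this]; exact id)
      simp [adj, this]
    · intro hnot
      exact absurd (hfin.mem_toFinset.mpr hf0P) hnot
  rw [hx]
  exact Submodule.sum_mem _ fun f hf =>
    Submodule.smul_mem _ _ (Submodule.subset_span ⟨f, hfin.mem_toFinset.mp hf, rfl⟩)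

lemma adj_mul_adj_apply (c d : Set (Ω × Ω)) (α β : Ω) :
    ((adj F c : Matrix Ω Ω F) * adj F d) α β = (cnum c d α β : F) := by
  classical
  rw [Matrix.mul_apply]
  have : ∀ γ : Ω, (adj F c : Matrix Ω Ω F) α γ * adj F d γ β =
      if γ ∈ outSet c α ∩ outSet (transposeRel d) β then (1 : F) else 0 := by
    intro γ
    simp only [adj, Matrix.of_apply, outSet, transposeRel, Set.mem_inter_iff, Set.mem_setOf_eq]
    by_cases h1 : (α, γ) ∈ c <;> by_cases h2 : (γ, β) ∈ d <;> simp [h1, h2]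
  simp_rw [this]
  have hcard : cnum c d α β =
      (Finset.univ.filter (fun γ => γ ∈ outSet c α ∩ outSet (transposeRel d) β)).card := by
    rw [cnum, Set.ncard_eq_toFinset_card']
    congr 1
    ext γ
    simp
  rw [Finset.sum_boole, hcard]

lemma jmul_add_left (x x' y : Matrix Ω Ω F) :
    jmul F (x + x') y = jmul F x y + jmul F x' y := by
  simp only [jmul, add_mul, mul_add]
  module

lemma jmul_smul_left (a : F) (x y : Matrix Ω Ω F) :
    jmul F (a • x) y = a • jmul F x y := by
  simp only [jmul, Matrix.smul_mul, Matrix.mul_smul, ← smul_add, smul_smul, mul_comm]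

lemma jmul_comm (x y : Matrix Ω Ω F) : jmul F x y = jmul F y x := by
  simp only [jmul, add_comm]

end Aux

theorem statement3 {F : Type*} [Field F] (hchar : ringChar F ≠ 2)
    {Ω : Type*} [Fintype Ω] [DecidableEq Ω] [Nonempty Ω]
    (P : Set (Set (Ω × Ω)))
    (hrainbow : IsRainbow P) (hjordan : IsJordanCond P) :
    IsCoherentJAlgebra F (Submodule.span F (adj F '' P)) := by
  classical
  obtain ⟨hpart, hdiag, htrans⟩ := hrainbow
  set A := Submodule.span F (adj F '' P) with hA
  -- uniqueness helper: membership in distinct classes is impossible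
  have hdisj : ∀ f ∈ P, ∀ g ∈ P, ∀ p : Ω × Ω, p ∈ f → p ∈ g → f = g := by
    intro f hf g hg p hpf hpg
    by_contra hne
    have := hpart.2.1 f hf g hg hne
    exact absurd (Set.mem_inter hpf hpg) (by rw [this]; exact id)
  refine ⟨?_, ?_, ?_, ?_, ?_⟩
  · -- identity
    apply mem_span_of_const P hpart
    intro f hf p hp q hq
    by_cases hpd : p.1 = p.2
    · have hsub : f ⊆ diagRel (Set.univ : Set Ω) :=
        hdiag f hf ⟨p, hp, ⟨hpd, trivial⟩⟩
      have hqd : q.1 = q.2 := (hsub hq).1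
      simp [Matrix.one_apply, hpd, hqd]
    · have hqd : ¬ q.1 = q.2 := by
        intro hqd
        exact hpd (hdiag f hf ⟨q, hq, ⟨hqd, trivial⟩⟩ hp).1
      simp [Matrix.one_apply, hpd, hqd]
  · -- all-ones
    apply mem_span_of_const P hpart
    intro f hf p hp q hq
    simp [allOnes]
  · -- transpose
    intro x hx
    induction hx using Submodule.span_induction with
    | mem x hx =>
      obtain ⟨f, hf, rfl⟩ := hx
      apply Submodule.subset_span
      refine ⟨transposeRel f, htrans f hf, ?_⟩
      ext α β
      simp [adj, transposeRel, Matrix.transpose_apply]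
      exact if_congr Iff.rfl rfl rfl
    | zero => simp
    | add x y _ _ hx hy => rw [Matrix.transpose_add]; exact Submodule.add_mem _ hx hy
    | smul a x _ hx => rw [Matrix.transpose_smul]; exact Submodule.smul_mem _ _ hx
  · -- Jordan product
    have hgen : ∀ c ∈ P, ∀ d ∈ P, jmul F (adj F c) (adj F d) ∈ A := by
      intro c hc d hd
      rw [jmul]
      apply Submodule.smul_mem
      apply mem_span_of_const P hpart
      intro f hf p hp q hq
      have hval : ∀ α β : Ω,
          ((adj F c : Matrix Ω Ω F) * adj F d + adj F d * adj F c) α β = (jnum c d α β : F) := by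
        intro α β
        simp [Matrix.add_apply, adj_mul_adj_apply, jnum]
      rw [hval, hval, hjordan c hc d hd f hf p hp q hq]
    intro x hx y hy
    induction hx using Submodule.span_induction with
    | mem x hxm =>
      obtain ⟨c, hc, rfl⟩ := hxm
      induction hy using Submodule.span_induction with
      | mem y hym =>
        obtain ⟨d, hd, rfl⟩ := hym
        exact hgen c hc d hd
      | zero => simp [jmul]
      | add y z _ _ hy hz =>
        rw [jmul_comm, jmul_add_left, jmul_comm y, jmul_comm z]
        exact Submodule.add_mem _ hy hz
      | smul a y _ hy =>
        rw [jmul_comm, jmul_smul_left, jmul_comm]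
        exact Submodule.smul_mem _ _ hy
    | zero => simp [jmul]
    | add x z _ _ hx hz =>
      rw [jmul_add_left]
      exact Submodule.add_mem _ hx hz
    | smul a x _ hx =>
      rw [jmul_smul_left]
      exact Submodule.smul_mem _ _ hx
  · -- Hadamard product
    have hgen : ∀ c ∈ P, ∀ d ∈ P, Matrix.hadamard (adj F c) (adj F d : Matrix Ω Ω F) ∈ A := by
      intro c hc d hd
      by_cases hcd : c = d
      · subst hcd
        have : Matrix.hadamard (adj F c) (adj F c : Matrix Ω Ω F) = adj F c := by
          ext α β
          by_cases h : (α, β) ∈ c <;> simp [Matrix.hadamard, adj, h]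
        rw [this]
        exact Submodule.subset_span ⟨c, hc, rfl⟩
      · have hemp := hpart.2.1 c hc d hd hcd
        have : Matrix.hadamard (adj F c) (adj F d : Matrix Ω Ω F) = 0 := by
          ext α β
          by_cases h1 : (α, β) ∈ c
          · have h2 : (α, β) ∉ d := by
              intro h2
              exact absurd (Set.mem_inter h1 h2) (by rw [hemp]; exact id)
            simp [Matrix.hadamard, adj, h1, h2]
          · simp [Matrix.hadamard, adj, h1]
        rw [this]
        exact Submodule.zero_mem _
    intro x hx y hy
    induction hx using Submodule.span_induction with
    | mem x hxm =>
      obtain ⟨c, hc, rfl⟩ := hxm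
      induction hy using Submodule.span_induction with
      | mem y hym =>
        obtain ⟨d, hd, rfl⟩ := hym
        exact hgen c hc d hd
      | zero => rw [Matrix.hadamard_zero]; exact Submodule.zero_mem _
      | add y z _ _ hy hz =>
        rw [Matrix.hadamard_add]
        exact Submodule.add_mem _ hy hz
      | smul a y _ hy =>
        rw [Matrix.hadamard_smul]
        exact Submodule.smul_mem _ _ hy
    | zero => rw [Matrix.zero_hadamard]; exact Submodule.zero_mem _
    | add x z _ _ hx hz =>
      rw [Matrix.add_hadamard]
      exact Submodule.add_mem _ hx hz
    | smul a x _ hx =>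
      rw [Matrix.smul_hadamard]
      exact Submodule.smul_mem _ _ hx

end JordanPaper

end
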